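/- At any optimum of the valley-filling problem (minimizing Σ_t (D(t) + Σ_n r_n(t))² subject to per-vehicle constraints), if no rate constraint is active for vehicle n at slots t and t', then the aggregate load L(t) = D(t) + Σ_m r_m(t) satisfies L(t) = L(t') (the optimal aggregate load is flat wherever charging rates are interior). -/

import Mathlib

open Finset


lemma valley_filling_aux {N T : ℕ} (D : Fin T → ℝ)
    (rmin rmax : Fin N → Fin T → ℝ) (B : Fin N → ℝ)
    (r : Fin N → Fin T → ℝ)
    (hfeas : r ∈ {r : Fin N → Fin T → ℝ |
      (∀ n t, rmin n t ≤ r n t ∧ r n t ≤ rmax n t) ∧ ∀ n, ∑ t, r n t = B n})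
    (hopt : IsMinOn (fun r : Fin N → Fin T → ℝ => ∑ t, (D t + ∑ n, r n t) ^ 2)
      {r : Fin N → Fin T → ℝ |
        (∀ n t, rmin n t ≤ r n t ∧ r n t ≤ rmax n t) ∧ ∀ n, ∑ t, r n t = B n} r)
    (n : Fin N) (t t' : Fin T)
    (hint : rmin n t < r n t) (hint' : r n t' < rmax n t')
    (hlt : D t' + ∑ m, r m t' < D t + ∑ m, r m t) : False := by
  obtain ⟨hbd, hbudget⟩ := hfeas
  set L : Fin T → ℝ := fun s => D s + ∑ m, r m s with hL
  have hne : t ≠ t' := by rintro rfl; exact lt_irrefl _ hlt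
  set ε : ℝ := min (min (r n t - rmin n t) (rmax n t' - r n t')) ((L t - L t') / 2) with hε
  have hεpos : 0 < ε := by
    apply lt_min (lt_min (by linarith) (by linarith))
    have : L t' < L t := hlt
    linarith
  have hε1 : ε ≤ r n t - rmin n t := le_trans (min_le_left _ _) (min_le_left _ _)
  have hε2 : ε ≤ rmax n t' - r n t' := le_trans (min_le_left _ _) (min_le_right _ _)
  have hε3 : ε ≤ (L t - L t') / 2 := min_le_right _ _
  set e : Fin T → ℝ := fun s => (if s = t then -ε else 0) + (if s = t' then ε else 0) with he
  set r' : Fin N → Fin T → ℝ := fun m s => r m s + (if m = n then e s else 0) with hr'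
  have hesum : ∑ s, e s = 0 := by
    simp [he, Finset.sum_add_distrib]
  have hfeas' : r' ∈ {r : Fin N → Fin T → ℝ |
      (∀ n t, rmin n t ≤ r n t ∧ r n t ≤ rmax n t) ∧ ∀ n, ∑ t, r n t = B n} := by
    constructor
    · intro m s
      by_cases hm : m = n
      · by_cases hs : s = t
        · have hv : r' m s = r n t - ε := by simp [hr', he, hm, hs, hne, sub_eq_add_neg]
          rw [hv, hm, hs]
          exact ⟨by linarith, by linarith [(hbd n t).2]⟩
        · by_cases hs' : s = t'
          · have hv : r' m s = r n t' + ε := by simp [hr', he, hm, hs', hne.symm]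
            rw [hv, hm, hs']
            exact ⟨by linarith [(hbd n t').1], by linarith⟩
          · have hv : r' m s = r m s := by simp [hr', he, hs, hs']
            rw [hv]; exact hbd m s
      · have hv : ∀ s, r' m s = r m s := fun s => by simp [hr', hm]
        rw [hv]; exact hbd m s
    · intro m
      by_cases hm : m = n
      · subst hm
        rw [show (∑ s, r' m s) = (∑ s, r m s) + ∑ s, e s by
          simp [hr', Finset.sum_add_distrib]]
        rw [hesum, hbudget m]; ring
      · have hv : ∀ s, r' m s = r m s := fun s => by simp [hr', hm]
        simp only [hv]; exact hbudget m
  have hkey := hopt hfeas'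
  -- compute the new objective
  have hagg : ∀ s, (∑ m, r' m s) = (∑ m, r m s) + e s := by
    intro s
    simp [hr', Finset.sum_add_distrib]
  have hobj : ∑ s, (D s + ∑ m, r' m s) ^ 2 = ∑ s, (L s + e s) ^ 2 := by
    apply Finset.sum_congr rfl
    intro s _
    rw [hagg s]
    simp only [hL]
    ring_nf
  have hdiff : ∑ s, (L s + e s) ^ 2 = (∑ s, (L s) ^ 2) + (2 * L t * (-ε) + ε ^ 2) + (2 * L t' * ε + ε ^ 2) := by
    have expand : ∀ s, (L s + e s) ^ 2 = (L s) ^ 2 + (2 * L s * e s + (e s) ^ 2) := by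
      intro s; ring
    have hpt : ∀ s : Fin T, 2 * L s * e s + (e s) ^ 2 =
        (if s = t then 2 * L t * (-ε) + ε ^ 2 else 0) + (if s = t' then 2 * L t' * ε + ε ^ 2 else 0) := by
      intro s
      by_cases hs : s = t
      · rw [hs, show e t = -ε by simp [he, hne], if_pos rfl, if_neg hne]
        ring
      · by_cases hs' : s = t'
        · rw [hs', show e t' = ε by simp [he, Ne.symm hne], if_neg (Ne.symm hne), if_pos rfl]
          ring
        · simp [he, hs, hs']
    have h2 : ∑ s, (2 * L s * e s + (e s) ^ 2)
        = (2 * L t * (-ε) + ε ^ 2) + (2 * L t' * ε + ε ^ 2) := by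
      rw [Finset.sum_congr rfl (fun s _ => hpt s), Finset.sum_add_distrib]
      simp
    rw [Finset.sum_congr rfl (fun s _ => expand s), Finset.sum_add_distrib, h2]
    ring
  have hkey' : (∑ s, (D s + ∑ m, r m s) ^ 2) ≤ ∑ s, (D s + ∑ m, r' m s) ^ 2 := hkey
  rw [hobj, hdiff] at hkey'
  have hLeq : ∑ s, (D s + ∑ m, r m s) ^ 2 = ∑ s, (L s) ^ 2 := rfl
  rw [hLeq] at hkey'
  have hlt2 : L t' < L t := hlt
  clear_value ε L
  have hLt : (0:ℝ) < L t - L t' := by linarith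
  have hAB : (2 * L t * (-ε) + ε ^ 2) + (2 * L t' * ε + ε ^ 2) < 0 := by
    nlinarith [mul_le_mul_of_nonneg_left hε3 hεpos.le, mul_pos hεpos hLt]
  linarith


/-- at any optimum of the valley-filling problem, if no rate constraint
is active for some vehicle `n` at slots `t` and `t'`, then the optimal aggregate load
`L(t) = D(t) + Σ_m r_m(t)` is the same at `t` and `t'`. -/
theorem valley_filling_flat {N T : ℕ} (D : Fin T → ℝ)
    (rmin rmax : Fin N → Fin T → ℝ) (B : Fin N → ℝ)
    (r : Fin N → Fin T → ℝ)
    (hfeas : r ∈ {r : Fin N → Fin T → ℝ |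
      (∀ n t, rmin n t ≤ r n t ∧ r n t ≤ rmax n t) ∧ ∀ n, ∑ t, r n t = B n})
    (hopt : IsMinOn (fun r : Fin N → Fin T → ℝ => ∑ t, (D t + ∑ n, r n t) ^ 2)
      {r : Fin N → Fin T → ℝ |
        (∀ n t, rmin n t ≤ r n t ∧ r n t ≤ rmax n t) ∧ ∀ n, ∑ t, r n t = B n} r)
    (n : Fin N) (t t' : Fin T)
    (hint : rmin n t < r n t ∧ r n t < rmax n t)
    (hint' : rmin n t' < r n t' ∧ r n t' < rmax n t') :
    D t + ∑ m, r m t = D t' + ∑ m, r m t' := by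
  rcases lt_trichotomy (D t + ∑ m, r m t) (D t' + ∑ m, r m t') with h | h | h
  · exact absurd h (by
      intro h
      exact valley_filling_aux D rmin rmax B r hfeas hopt n t' t hint'.1 hint.2 h)
  · exact h
  · exact absurd h (by
      intro h
      exact valley_filling_aux D rmin rmax B r hfeas hopt n t t' hint.1 hint'.2 h)
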